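/- Let h > 0 and k ∈ ℝ, let H^{fd5}_{h/2} be the standard 5-point Helmholtz operator with grid spacing h/2, R the full-weighting restriction and P = 4Rᵀ the bilinear-interpolation prolongation. Then for every ξ = (ξ₁, ξ₂) ∈ ℝ², the coarse-grid plane wave v_{I,J} = exp(i h (ξ₁ I + ξ₂ J)) satisfies (R (H^{fd5}_{h/2} (P v)))_{I,J} = σ^{gal}_h(ξ) · v_{I,J} for all (I,J) ∈ ℤ², where σ^{gal}_h(ξ) = 3h^{-2} − (9/16)k² + (−h^{-2} − (3/16)k²)(cos(ξ₁h) + cos(ξ₂h)) + (−(1/2)h^{-2} − (1/32)k²)(cos((ξ₁+ξ₂)h) + cos((ξ₁−ξ₂)h)). -/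
import Mathlib


/-- The standard 5-point finite difference Helmholtz operator in 2-D. -/
noncomputable def Hfd5 (h k : ℝ) (u : ℤ → ℤ → ℂ) (i j : ℤ) : ℂ :=
  (h : ℂ) ^ (-2 : ℤ) *
      (4 * u i j - u (i - 1) j - u (i + 1) j - u i (j - 1) - u i (j + 1)) -
    (k : ℂ) ^ 2 * u i j

/-- The full-weighting restriction operator. -/
noncomputable def fwRestrict (u : ℤ → ℤ → ℂ) (I J : ℤ) : ℂ :=
  (1 / 16 : ℂ) *
    (4 * u (2 * I) (2 * J) +
      2 * (u (2 * I - 1) (2 * J) + u (2 * I + 1) (2 * J) +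
           u (2 * I) (2 * J - 1) + u (2 * I) (2 * J + 1)) +
      u (2 * I - 1) (2 * J - 1) + u (2 * I + 1) (2 * J - 1) +
      u (2 * I - 1) (2 * J + 1) + u (2 * I + 1) (2 * J + 1))

/-- Symbol of the Galerkin coarse-grid operator built from the 5-point scheme
with full weighting restriction and bilinear prolongation. -/
noncomputable def sigmaGal (h k ξ₁ ξ₂ : ℝ) : ℝ :=
  3 * h ^ (-2 : ℤ) - 9 / 16 * k ^ 2 +
    (-h ^ (-2 : ℤ) - 3 / 16 * k ^ 2) * (Real.cos (ξ₁ * h) + Real.cos (ξ₂ * h)) +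
    (-(1 / 2) * h ^ (-2 : ℤ) - 1 / 32 * k ^ 2) *
      (Real.cos ((ξ₁ + ξ₂) * h) + Real.cos ((ξ₁ - ξ₂) * h))

set_option maxHeartbeats 2000000 in
/-- the Galerkin coarse operator `R ∘ H^{fd5}_{h/2} ∘ P` has the
coarse plane waves as eigenfunctions, with eigenvalue `sigmaGal h k ξ₁ ξ₂`. -/
theorem stmt5 (h k : ℝ) (hh : 0 < h) (ξ₁ ξ₂ : ℝ)
    (v : ℤ → ℤ → ℂ)
    (hv : ∀ I J : ℤ,
      v I J = Complex.exp (Complex.I * (h : ℂ) * ((ξ₁ : ℂ) * (I : ℂ) + (ξ₂ : ℂ) * (J : ℂ))))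
    (Pv : ℤ → ℤ → ℂ)
    (hP00 : ∀ I J : ℤ, Pv (2 * I) (2 * J) = v I J)
    (hP10 : ∀ I J : ℤ, Pv (2 * I + 1) (2 * J) = (1 / 2) * (v I J + v (I + 1) J))
    (hP01 : ∀ I J : ℤ, Pv (2 * I) (2 * J + 1) = (1 / 2) * (v I J + v I (J + 1)))
    (hP11 : ∀ I J : ℤ, Pv (2 * I + 1) (2 * J + 1) =
      (1 / 4) * (v I J + v (I + 1) J + v I (J + 1) + v (I + 1) (J + 1))) :
    ∀ I J : ℤ,
      fwRestrict (Hfd5 (h / 2) k Pv) I J = (sigmaGal h k ξ₁ ξ₂ : ℂ) * v I J := by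
  intro I J
  have hne : (h : ℂ) ≠ 0 := by exact_mod_cast hh.ne'
  obtain ⟨w₁, hw1⟩ : ∃ w : ℂ, w = Complex.exp (Complex.I * (h : ℂ) * ξ₁) := ⟨_, rfl⟩
  obtain ⟨w₂, hw2⟩ : ∃ w : ℂ, w = Complex.exp (Complex.I * (h : ℂ) * ξ₂) := ⟨_, rfl⟩
  have hw1n : w₁ ≠ 0 := by rw [hw1]; exact Complex.exp_ne_zero _
  have hw2n : w₂ ≠ 0 := by rw [hw2]; exact Complex.exp_ne_zero _
  have hvv0 : ∀ m n : ℕ, v (I - 1 + m) (J - 1 + n) =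
      w₁ ^ m * w₂ ^ n * v (I - 1) (J - 1) := by
    intro m n
    rw [hv, hv, hw1, hw2, ← Complex.exp_nat_mul, ← Complex.exp_nat_mul,
      ← Complex.exp_add, ← Complex.exp_add]
    congr 1
    push_cast
    ring
  have key : ∀ (a b : ℤ) (m n : ℕ), a = I - 1 + m → b = J - 1 + n →
      v a b = w₁ ^ m * w₂ ^ n * v (I - 1) (J - 1) := by
    rintro a b m n rfl rfl; exact hvv0 m n
  have e10 : v I (J - 1) = w₁ ^ 1 * w₂ ^ 0 * v (I - 1) (J - 1) :=
    key _ _ 1 0 (by push_cast; ring) (by push_cast; ring)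
  have e20 : v (I + 1) (J - 1) = w₁ ^ 2 * w₂ ^ 0 * v (I - 1) (J - 1) :=
    key _ _ 2 0 (by push_cast; ring) (by push_cast; ring)
  have e01 : v (I - 1) J = w₁ ^ 0 * w₂ ^ 1 * v (I - 1) (J - 1) :=
    key _ _ 0 1 (by push_cast; ring) (by push_cast; ring)
  have e11 : v I J = w₁ ^ 1 * w₂ ^ 1 * v (I - 1) (J - 1) :=
    key _ _ 1 1 (by push_cast; ring) (by push_cast; ring)
  have e21 : v (I + 1) J = w₁ ^ 2 * w₂ ^ 1 * v (I - 1) (J - 1) :=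
    key _ _ 2 1 (by push_cast; ring) (by push_cast; ring)
  have e02 : v (I - 1) (J + 1) = w₁ ^ 0 * w₂ ^ 2 * v (I - 1) (J - 1) :=
    key _ _ 0 2 (by push_cast; ring) (by push_cast; ring)
  have e12 : v I (J + 1) = w₁ ^ 1 * w₂ ^ 2 * v (I - 1) (J - 1) :=
    key _ _ 1 2 (by push_cast; ring) (by push_cast; ring)
  have e22 : v (I + 1) (J + 1) = w₁ ^ 2 * w₂ ^ 2 * v (I - 1) (J - 1) :=
    key _ _ 2 2 (by push_cast; ring) (by push_cast; ring)
  obtain ⟨u₁, hu1d⟩ : ∃ u : ℂ, u = Complex.exp (-(Complex.I * (h : ℂ) * ξ₁)) := ⟨_, rfl⟩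
  obtain ⟨u₂, hu2d⟩ : ∃ u : ℂ, u = Complex.exp (-(Complex.I * (h : ℂ) * ξ₂)) := ⟨_, rfl⟩
  have hu1 : w₁ * u₁ = 1 := by
    rw [hw1, hu1d, ← Complex.exp_add]; simp
  have hu2 : w₂ * u₂ = 1 := by
    rw [hw2, hu2d, ← Complex.exp_add]; simp
  have c1 : ((Real.cos (ξ₁ * h) : ℝ) : ℂ) = (w₁ + u₁) / 2 := by
    rw [Complex.ofReal_cos, eq_div_iff (two_ne_zero' ℂ), mul_comm, Complex.two_cos,
      hw1, hu1d]
    congr 2 <;> push_cast <;> ring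
  have c2 : ((Real.cos (ξ₂ * h) : ℝ) : ℂ) = (w₂ + u₂) / 2 := by
    rw [Complex.ofReal_cos, eq_div_iff (two_ne_zero' ℂ), mul_comm, Complex.two_cos,
      hw2, hu2d]
    congr 2 <;> push_cast <;> ring
  have c3 : ((Real.cos ((ξ₁ + ξ₂) * h) : ℝ) : ℂ) = (w₁ * w₂ + u₁ * u₂) / 2 := by
    rw [Complex.ofReal_cos, eq_div_iff (two_ne_zero' ℂ), mul_comm, Complex.two_cos,
      hw1, hw2, hu1d, hu2d, ← Complex.exp_add, ← Complex.exp_add]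
    congr 2 <;> push_cast <;> ring
  have c4 : ((Real.cos ((ξ₁ - ξ₂) * h) : ℝ) : ℂ) = (w₁ * u₂ + u₁ * w₂) / 2 := by
    rw [Complex.ofReal_cos, eq_div_iff (two_ne_zero' ℂ), mul_comm, Complex.two_cos,
      hw1, hw2, hu1d, hu2d, ← Complex.exp_add, ← Complex.exp_add]
    congr 2 <;> push_cast <;> ring
  have hz2 : ((h : ℂ) / 2) ^ (-2 : ℤ) = 4 / (h : ℂ) ^ 2 := by
    rw [zpow_neg]
    rw [show ((h : ℂ) / 2) ^ (2 : ℤ) = (h : ℂ) ^ 2 / 4 from by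
      rw [zpow_two]; ring]
    rw [inv_div]
  have hz : ((h : ℝ)) ^ (-2 : ℤ) = 1 / h ^ 2 := by
    rw [zpow_neg, zpow_two, one_div, pow_two]
  have crhs : ((sigmaGal h k ξ₁ ξ₂ : ℝ) : ℂ) * v I J =
      ((3 / (h : ℂ) ^ 2 - 9 / 16 * (k : ℂ) ^ 2) * (w₁ * w₂)
        + (-(1 / (h : ℂ) ^ 2) - 3 / 16 * (k : ℂ) ^ 2) *
            ((w₁ ^ 2 * w₂ + w₂) / 2 + (w₁ * w₂ ^ 2 + w₁) / 2)
        + (-(1 / 2) * (1 / (h : ℂ) ^ 2) - 1 / 32 * (k : ℂ) ^ 2) *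
            ((w₁ ^ 2 * w₂ ^ 2 + 1) / 2 + (w₁ ^ 2 + w₂ ^ 2) / 2)) * v (I - 1) (J - 1) := by
    rw [e11]
    simp only [sigmaGal, hz]
    push_cast [-Complex.ofReal_cos]
    rw [c1, c2, c3, c4]
    linear_combination
      (v (I - 1) (J - 1) *
        ((-(1 / (h : ℂ) ^ 2) - 3 / 16 * (k : ℂ) ^ 2) / 2 * w₂ +
         (-(1 / 2) * (1 / (h : ℂ) ^ 2) - 1 / 32 * (k : ℂ) ^ 2) / 2 * (w₂ * u₂ + w₂ ^ 2))) * hu1 +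
      (v (I - 1) (J - 1) *
        ((-(1 / (h : ℂ) ^ 2) - 3 / 16 * (k : ℂ) ^ 2) / 2 * w₁ +
         (-(1 / 2) * (1 / (h : ℂ) ^ 2) - 1 / 32 * (k : ℂ) ^ 2) / 2 * (1 + w₁ ^ 2))) * hu2
  rw [crhs]
  simp only [fwRestrict, Hfd5]
  simp only [show (2 * I - 1 - 1 : ℤ) = 2 * (I - 1) from by ring,
    show (2 * I - 1 + 1 : ℤ) = 2 * I from by ring,
    show (2 * I + 1 + 1 : ℤ) = 2 * (I + 1) from by ring,
    show (2 * I + 1 - 1 : ℤ) = 2 * I from by ring,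
    show (2 * J - 1 - 1 : ℤ) = 2 * (J - 1) from by ring,
    show (2 * J - 1 + 1 : ℤ) = 2 * J from by ring,
    show (2 * J + 1 + 1 : ℤ) = 2 * (J + 1) from by ring,
    show (2 * J + 1 - 1 : ℤ) = 2 * J from by ring]
  simp only [show (2 * I - 1 : ℤ) = 2 * (I - 1) + 1 from by ring,
    show (2 * J - 1 : ℤ) = 2 * (J - 1) + 1 from by ring]
  simp only [hP00, hP10, hP01, hP11]
  simp only [show (I - 1 + 1 : ℤ) = I from by ring, show (J - 1 + 1 : ℤ) = J from by ring]
  simp only [e10, e20, e01, e11, e21, e02, e12, e22]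
  push_cast
  rw [hz2]
  ring
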